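/- Let λ ∈ ℝ. Suppose v¹, v³ : [0,L] → ℂ are C², v², v⁴, v⁵, v⁶ : [0,L] → ℂ are C¹, all six vanish at x = 0 and x = L, the function S := k₃(∂ₓv⁵ − l·v¹) + d·(∂ₓv⁶ − l·v²) extends to a C¹ function on [0,L], and on (0,L) the eigenvalue equations hold: v² = iλv¹, v⁴ = iλv³, v⁶ = iλv⁵, k₁·∂ₓ(∂ₓv¹ + v³ + l·v⁵) + l·k₃(∂ₓv⁵ − l·v¹) + l·d(x)(∂ₓv⁶ − l·v²) = iλρ₁v², k₂·∂ₓ²v³ − k₁(∂ₓv¹ + v³ + l·v⁵) = iλρ₂v⁴, and ∂ₓS − l·k₁(∂ₓv¹ + v³ + l·v⁵) = iλρ₁v⁶. Then v¹ = v² = v³ = v⁴ = v⁵ = v⁶ = 0 identically on [0,L]. (This is the injectivity of iλI − 𝒜, i.e., ker(iλI − 𝒜) = {0} for every real λ.) -/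

import Mathlib

open Set MeasureTheory

private lemma bresse_vec6_0 {M : Type*} (a b c d e f : M) : ![a,b,c,d,e,f] 0 = a := rfl
private lemma bresse_vec6_1 {M : Type*} (a b c d e f : M) : ![a,b,c,d,e,f] 1 = b := rfl
private lemma bresse_vec6_2 {M : Type*} (a b c d e f : M) : ![a,b,c,d,e,f] 2 = c := rfl
private lemma bresse_vec6_3 {M : Type*} (a b c d e f : M) : ![a,b,c,d,e,f] 3 = d := rfl
private lemma bresse_vec6_4 {M : Type*} (a b c d e f : M) : ![a,b,c,d,e,f] 4 = e := rfl
private lemma bresse_vec6_5 {M : Type*} (a b c d e f : M) : ![a,b,c,d,e,f] 5 = f := rfl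

private lemma bresse_const_of_hasDerivAt_zero {f : ℝ → ℂ} {a b : ℝ}
    (hf : ∀ z ∈ Ioo a b, HasDerivAt f 0 z) {x y : ℝ} (hx : x ∈ Ioo a b) (hy : y ∈ Ioo a b) :
    f x = f y := by
  apply Convex.is_const_of_fderivWithin_eq_zero (convex_Ioo a b)
    (fun z hz => ((hf z hz).differentiableAt).differentiableWithinAt) ?_ hx hy
  intro z hz
  rw [fderivWithin_of_isOpen isOpen_Ioo hz, (hf z hz).hasFDerivAt.fderiv]
  ext t
  simp

private lemma bresse_closure_val {f : ℝ → ℂ} {a b A B : ℝ} (hab : a < b)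
    (hsub : Ioo a b ⊆ Icc A B) (hf : ContinuousOn f (Icc A B)) {c : ℂ}
    (hv : ∀ x ∈ Ioo a b, f x = c) : f a = c ∧ f b = c := by
  have hcl : closure (Ioo a b) = Icc a b := closure_Ioo hab.ne
  have hIcc : Icc a b ⊆ Icc A B := by
    rw [← hcl]; exact closure_minimal hsub isClosed_Icc
  have key : ∀ z ∈ Icc a b, z ∈ closure (Ioo a b) → f z = c := by
    intro z hz hzc
    haveI : (nhdsWithin z (Ioo a b)).NeBot := mem_closure_iff_nhdsWithin_neBot.mp hzc
    have h1 : Filter.Tendsto f (nhdsWithin z (Ioo a b)) (nhds (f z)) :=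
      (hf.continuousWithinAt (hIcc hz)).mono_left (nhdsWithin_mono z hsub)
    have h2 : Filter.Tendsto f (nhdsWithin z (Ioo a b)) (nhds c) := by
      apply Filter.Tendsto.congr' _ tendsto_const_nhds
      exact Filter.eventuallyEq_of_mem self_mem_nhdsWithin (fun x hx => (hv x hx).symm)
    exact tendsto_nhds_unique h1 h2
  constructor
  · exact key a ⟨le_rfl, hab.le⟩ (hcl ▸ ⟨le_rfl, hab.le⟩)
  · exact key b ⟨hab.le, le_rfl⟩ (hcl ▸ ⟨hab.le, le_rfl⟩)

private lemma bresse_zero_of_ae_zero {f : ℝ → ℝ} {V : Set ℝ} (hV : IsOpen V)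
    (hf : ContinuousOn f V) (h0 : ∀ᵐ x ∂(volume.restrict V), f x = 0) :
    ∀ x ∈ V, f x = 0 := by
  intro x hx
  by_contra hne
  have hW : IsOpen (V ∩ f ⁻¹' ({0}ᶜ)) := hf.isOpen_inter_preimage hV isOpen_compl_singleton
  have hxW : x ∈ V ∩ f ⁻¹' ({0}ᶜ) := ⟨hx, hne⟩
  obtain ⟨ε, hε, hball⟩ := Metric.isOpen_iff.mp hW x hxW
  have hnull : volume ({y | ¬(y ∈ V → f y = 0)}) = 0 :=
    (ae_restrict_iff' hV.measurableSet).mp h0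
  have hsub : Metric.ball x ε ⊆ {y | ¬(y ∈ V → f y = 0)} := by
    intro y hy
    have := hball hy
    simp only [Set.mem_setOf_eq]
    intro himp
    exact this.2 (himp this.1)
  have : volume (Metric.ball x ε) = 0 := measure_mono_null hsub hnull
  exact absurd this (Metric.measure_ball_pos volume x hε).ne'

set_option maxHeartbeats 2000000 in
theorem bresse_ker_trivial
    (ρ₁ ρ₂ k₁ k₂ k₃ l L d₀ α β : ℝ)
    (hρ₁ : 0 < ρ₁) (hρ₂ : 0 < ρ₂) (hk₁ : 0 < k₁) (hk₂ : 0 < k₂) (hk₃ : 0 < k₃)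
    (hl : 0 < l) (hL : 0 < L) (hd₀ : 0 < d₀)
    (hα : 0 < α) (hαβ : α < β) (hβL : β < L)
    (d : ℝ → ℝ) (hd : ∀ x, d x = if α < x ∧ x < β then d₀ else 0)
    (lam : ℝ)
    (v1 v2 v3 v4 v5 v6 : ℝ → ℂ)
    (hv1 : ContDiffOn ℝ 2 v1 (Set.Icc 0 L)) (hv3 : ContDiffOn ℝ 2 v3 (Set.Icc 0 L))
    (hv2 : ContDiffOn ℝ 1 v2 (Set.Icc 0 L)) (hv4 : ContDiffOn ℝ 1 v4 (Set.Icc 0 L))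
    (hv5 : ContDiffOn ℝ 1 v5 (Set.Icc 0 L)) (hv6 : ContDiffOn ℝ 1 v6 (Set.Icc 0 L))
    (hbc : v1 0 = 0 ∧ v1 L = 0 ∧ v2 0 = 0 ∧ v2 L = 0 ∧ v3 0 = 0 ∧ v3 L = 0
      ∧ v4 0 = 0 ∧ v4 L = 0 ∧ v5 0 = 0 ∧ v5 L = 0 ∧ v6 0 = 0 ∧ v6 L = 0)
    (S : ℝ → ℂ) (hS : ContDiffOn ℝ 1 S (Set.Icc 0 L))
    (hSdef : ∀ x ∈ Set.Icc (0:ℝ) L,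
      S x = (k₃ : ℂ) * (deriv v5 x - (l : ℂ) * v1 x)
        + (d x : ℂ) * (deriv v6 x - (l : ℂ) * v2 x))
    (he1 : ∀ x ∈ Set.Ioo (0:ℝ) L, v2 x = Complex.I * (lam : ℂ) * v1 x)
    (he3 : ∀ x ∈ Set.Ioo (0:ℝ) L, v4 x = Complex.I * (lam : ℂ) * v3 x)
    (he5 : ∀ x ∈ Set.Ioo (0:ℝ) L, v6 x = Complex.I * (lam : ℂ) * v5 x)
    (he2 : ∀ x ∈ Set.Ioo (0:ℝ) L,
      (k₁ : ℂ) * deriv (fun y => deriv v1 y + v3 y + (l : ℂ) * v5 y) x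
        + (l : ℂ) * (k₃ : ℂ) * (deriv v5 x - (l : ℂ) * v1 x)
        + (l : ℂ) * (d x : ℂ) * (deriv v6 x - (l : ℂ) * v2 x)
      = Complex.I * (lam : ℂ) * (ρ₁ : ℂ) * v2 x)
    (he4 : ∀ x ∈ Set.Ioo (0:ℝ) L,
      (k₂ : ℂ) * deriv (deriv v3) x
        - (k₁ : ℂ) * (deriv v1 x + v3 x + (l : ℂ) * v5 x)
      = Complex.I * (lam : ℂ) * (ρ₂ : ℂ) * v4 x)
    (he6 : ∀ x ∈ Set.Ioo (0:ℝ) L,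
      deriv S x - (l : ℂ) * (k₁ : ℂ) * (deriv v1 x + v3 x + (l : ℂ) * v5 x)
      = Complex.I * (lam : ℂ) * (ρ₁ : ℂ) * v6 x) :
    ∀ x ∈ Set.Icc (0:ℝ) L,
      v1 x = 0 ∧ v2 x = 0 ∧ v3 x = 0 ∧ v4 x = 0 ∧ v5 x = 0 ∧ v6 x = 0 := by
  classical
  obtain ⟨hb10, hb1L, hb20, hb2L, hb30, hb3L, hb40, hb4L, hb50, hb5L, hb60, hb6L⟩ := hbc
  have hL0 : (0:ℝ) ≤ L := hL.le
  have hUD : UniqueDiffOn ℝ (Icc (0:ℝ) L) := uniqueDiffOn_Icc hL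
  have hk1ne : (k₁:ℂ) ≠ 0 := by exact_mod_cast hk₁.ne'
  have hk2ne : (k₂:ℂ) ≠ 0 := by exact_mod_cast hk₂.ne'
  have hk3ne : (k₃:ℂ) ≠ 0 := by exact_mod_cast hk₃.ne'
  have hlne : (l:ℂ) ≠ 0 := by exact_mod_cast hl.ne'
  have hρ1ne : (ρ₁:ℂ) ≠ 0 := by exact_mod_cast hρ₁.ne'
  have hρ2ne : (ρ₂:ℂ) ≠ 0 := by exact_mod_cast hρ₂.ne'
  -- d vanishes outside (α, β) and is nonnegative
  have hdx0 : ∀ x : ℝ, ¬(α < x ∧ x < β) → d x = 0 := fun x h => by rw [hd x, if_neg h]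
  have hdnn : ∀ x : ℝ, 0 ≤ d x := by
    intro x; rw [hd x]; split; exacts [hd₀.le, le_rfl]
  set D1 := derivWithin v1 (Icc (0:ℝ) L) with hD1def
  set D3 := derivWithin v3 (Icc (0:ℝ) L) with hD3def
  set D5 := derivWithin v5 (Icc (0:ℝ) L) with hD5def
  have hD1c1 : ContDiffOn ℝ 1 D1 (Icc 0 L) := hv1.derivWithin hUD (by norm_num)
  have hD3c1 : ContDiffOn ℝ 1 D3 (Icc 0 L) := hv3.derivWithin hUD (by norm_num)
  have hD5c0 : ContDiffOn ℝ 0 D5 (Icc 0 L) := hv5.derivWithin hUD (by norm_num)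
  have hv1cont : ContinuousOn v1 (Icc 0 L) := hv1.continuousOn
  have hv3cont : ContinuousOn v3 (Icc 0 L) := hv3.continuousOn
  have hv5cont : ContinuousOn v5 (Icc 0 L) := hv5.continuousOn
  have hD1cont : ContinuousOn D1 (Icc 0 L) := hD1c1.continuousOn
  have hD3cont : ContinuousOn D3 (Icc 0 L) := hD3c1.continuousOn
  have hD5cont : ContinuousOn D5 (Icc 0 L) := hD5c0.continuousOn
  have hScont : ContinuousOn S (Icc 0 L) := hS.continuousOn
  have hmem : ∀ x ∈ Ioo (0:ℝ) L, Icc (0:ℝ) L ∈ nhds x := fun x hx => Icc_mem_nhds hx.1 hx.2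
  have hder1 : ∀ x ∈ Ioo (0:ℝ) L, deriv v1 x = D1 x :=
    fun x hx => (derivWithin_of_mem_nhds (hmem x hx)).symm
  have hder3 : ∀ x ∈ Ioo (0:ℝ) L, deriv v3 x = D3 x :=
    fun x hx => (derivWithin_of_mem_nhds (hmem x hx)).symm
  have hder5 : ∀ x ∈ Ioo (0:ℝ) L, deriv v5 x = D5 x :=
    fun x hx => (derivWithin_of_mem_nhds (hmem x hx)).symm
  have hdiff1 : ∀ x ∈ Ioo (0:ℝ) L, HasDerivAt v1 (D1 x) x := by
    intro x hx
    have h := ((hv1.differentiableOn (by norm_num)) x (Ioo_subset_Icc_self hx)).differentiableAt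
      (hmem x hx)
    have := h.hasDerivAt
    rwa [hder1 x hx] at this
  have hdiff3 : ∀ x ∈ Ioo (0:ℝ) L, HasDerivAt v3 (D3 x) x := by
    intro x hx
    have h := ((hv3.differentiableOn (by norm_num)) x (Ioo_subset_Icc_self hx)).differentiableAt
      (hmem x hx)
    have := h.hasDerivAt
    rwa [hder3 x hx] at this
  have hdiff5 : ∀ x ∈ Ioo (0:ℝ) L, HasDerivAt v5 (D5 x) x := by
    intro x hx
    have h := ((hv5.differentiableOn (by norm_num)) x (Ioo_subset_Icc_self hx)).differentiableAt
      (hmem x hx)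
    have := h.hasDerivAt
    rwa [hder5 x hx] at this
  have hD1diffAt : ∀ x ∈ Ioo (0:ℝ) L, DifferentiableAt ℝ D1 x := fun x hx =>
    ((hD1c1.differentiableOn (by norm_num)) x (Ioo_subset_Icc_self hx)).differentiableAt (hmem x hx)
  have hD3diffAt : ∀ x ∈ Ioo (0:ℝ) L, DifferentiableAt ℝ D3 x := fun x hx =>
    ((hD3c1.differentiableOn (by norm_num)) x (Ioo_subset_Icc_self hx)).differentiableAt (hmem x hx)
  have hSdiffAt : ∀ x ∈ Ioo (0:ℝ) L, DifferentiableAt ℝ S x := fun x hx =>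
    ((hS.differentiableOn (by norm_num)) x (Ioo_subset_Icc_self hx)).differentiableAt (hmem x hx)
  set Tt : ℝ → ℂ := fun y => D1 y + v3 y + (l:ℂ) * v5 y with hTtdef
  set ht : ℝ → ℂ := fun y => D5 y - (l:ℂ) * v1 y with hhtdef
  have hTtcont : ContinuousOn Tt (Icc 0 L) :=
    (hD1cont.add hv3cont).add (continuousOn_const.mul hv5cont)
  have hhtcont : ContinuousOn ht (Icc 0 L) := hD5cont.sub (continuousOn_const.mul hv1cont)
  -- derivative of Tt on the interior
  have hTt' : ∀ x ∈ Ioo (0:ℝ) L,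
      HasDerivAt Tt ((-(lam:ℂ)^2 * ρ₁ * v1 x - (l:ℂ) * S x) / k₁) x := by
    intro x hx
    have hTdiff : DifferentiableAt ℝ Tt x :=
      ((hD1diffAt x hx).add (hdiff3 x hx).differentiableAt).add
        ((hdiff5 x hx).differentiableAt.const_mul _)
    have hTT : HasDerivAt Tt (deriv Tt x) x := hTdiff.hasDerivAt
    have hev : (fun y => deriv v1 y + v3 y + (l:ℂ) * v5 y) =ᶠ[nhds x] Tt := by
      filter_upwards [isOpen_Ioo.mem_nhds hx] with y hy
      rw [hder1 y hy]
    have e2 := he2 x hx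
    rw [show deriv (fun y => deriv v1 y + v3 y + (l:ℂ) * v5 y) x = deriv Tt x from
      hev.deriv_eq] at e2
    have eS := hSdef x (Ioo_subset_Icc_self hx)
    have e1 := he1 x hx
    have hval : deriv Tt x = (-(lam:ℂ)^2 * ρ₁ * v1 x - (l:ℂ) * S x) / k₁ := by
      rw [eq_div_iff hk1ne, mul_comm]
      linear_combination e2 + (l:ℂ) * eS + Complex.I * (lam:ℂ) * (ρ₁:ℂ) * e1
        + (lam:ℂ)^2 * (ρ₁:ℂ) * (v1 x) * Complex.I_sq
    rwa [hval] at hTT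
  -- derivative of D3 on the interior
  have hD3' : ∀ x ∈ Ioo (0:ℝ) L,
      HasDerivAt D3 ((-(lam:ℂ)^2 * ρ₂ * v3 x + (k₁:ℂ) * Tt x) / k₂) x := by
    intro x hx
    have hTT : HasDerivAt D3 (deriv D3 x) x := (hD3diffAt x hx).hasDerivAt
    have hev : deriv v3 =ᶠ[nhds x] D3 := by
      filter_upwards [isOpen_Ioo.mem_nhds hx] with y hy
      rw [hder3 y hy]
    have e4 := he4 x hx
    rw [show deriv (deriv v3) x = deriv D3 x from hev.deriv_eq, hder1 x hx] at e4
    have e3 := he3 x hx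
    have hval : deriv D3 x = (-(lam:ℂ)^2 * ρ₂ * v3 x + (k₁:ℂ) * Tt x) / k₂ := by
      rw [eq_div_iff hk2ne, mul_comm]
      linear_combination e4 + Complex.I * (lam:ℂ) * (ρ₂:ℂ) * e3
        + (lam:ℂ)^2 * (ρ₂:ℂ) * (v3 x) * Complex.I_sq
    rwa [hval] at hTT
  -- derivative of S on the interior
  have hS' : ∀ x ∈ Ioo (0:ℝ) L,
      HasDerivAt S ((l:ℂ) * k₁ * Tt x - (lam:ℂ)^2 * ρ₁ * v5 x) x := by
    intro x hx
    have hTT : HasDerivAt S (deriv S x) x := (hSdiffAt x hx).hasDerivAt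
    have e6 := he6 x hx
    rw [hder1 x hx] at e6
    have e5 := he5 x hx
    have hval : deriv S x = (l:ℂ) * k₁ * Tt x - (lam:ℂ)^2 * ρ₁ * v5 x := by
      linear_combination e6 + Complex.I * (lam:ℂ) * (ρ₁:ℂ) * e5
        + (lam:ℂ)^2 * (ρ₁:ℂ) * (v5 x) * Complex.I_sq
    rwa [hval] at hTT
  -- pointwise formula for S on the interior
  have hdv6 : ∀ x ∈ Ioo (0:ℝ) L, deriv v6 x = Complex.I * (lam:ℂ) * D5 x := by
    intro x hx
    have hev : v6 =ᶠ[nhds x] (fun y => Complex.I * (lam:ℂ) * v5 y) := by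
      filter_upwards [isOpen_Ioo.mem_nhds hx] with y hy
      exact he5 y hy
    rw [hev.deriv_eq, deriv_const_mul _ (hdiff5 x hx).differentiableAt, hder5 x hx]
  have hSval : ∀ x ∈ Ioo (0:ℝ) L,
      S x = ((k₃:ℂ) + (d x : ℂ) * (Complex.I * (lam:ℂ))) * ht x := by
    intro x hx
    have eS := hSdef x (Ioo_subset_Icc_self hx)
    rw [hder5 x hx, hdv6 x hx, he1 x hx] at eS
    rw [eS, hhtdef]
    ring

  -- energy function and its derivative
  set P : ℝ → ℂ := fun x => (k₁:ℂ) * Tt x * (starRingEnd ℂ) (v1 x)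
    + (k₂:ℂ) * D3 x * (starRingEnd ℂ) (v3 x) + S x * (starRingEnd ℂ) (v5 x) with hPdef
  set g : ℝ → ℂ := fun x => -(lam:ℂ)^2 * ((ρ₁:ℂ) * v1 x * (starRingEnd ℂ) (v1 x)
      + (ρ₂:ℂ) * v3 x * (starRingEnd ℂ) (v3 x) + (ρ₁:ℂ) * v5 x * (starRingEnd ℂ) (v5 x))
    + (k₂:ℂ) * D3 x * (starRingEnd ℂ) (D3 x) + (k₁:ℂ) * Tt x * (starRingEnd ℂ) (Tt x)
    + S x * (starRingEnd ℂ) (ht x) with hgdef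
  have hPcont : ContinuousOn P (Icc 0 L) :=
    (((continuousOn_const.mul hTtcont).mul hv1cont.star).add
      ((continuousOn_const.mul hD3cont).mul hv3cont.star)).add (hScont.mul hv5cont.star)
  have hgcont : ContinuousOn g (Icc 0 L) := by
    apply ContinuousOn.add
    apply ContinuousOn.add
    apply ContinuousOn.add
    · exact continuousOn_const.mul
        ((((continuousOn_const.mul hv1cont).mul hv1cont.star).add
          ((continuousOn_const.mul hv3cont).mul hv3cont.star)).add
          ((continuousOn_const.mul hv5cont).mul hv5cont.star))
    · exact (continuousOn_const.mul hD3cont).mul hD3cont.star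
    · exact (continuousOn_const.mul hTtcont).mul hTtcont.star
    · exact hScont.mul hhtcont.star
  have hPderiv : ∀ x ∈ Ioo (0:ℝ) L, HasDerivAt P (g x) x := by
    intro x hx
    have c1 : HasDerivAt (fun y => (starRingEnd ℂ) (v1 y)) ((starRingEnd ℂ) (D1 x)) x :=
      (hdiff1 x hx).star
    have c3 : HasDerivAt (fun y => (starRingEnd ℂ) (v3 y)) ((starRingEnd ℂ) (D3 x)) x :=
      (hdiff3 x hx).star
    have c5 : HasDerivAt (fun y => (starRingEnd ℂ) (v5 y)) ((starRingEnd ℂ) (D5 x)) x :=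
      (hdiff5 x hx).star
    have h1 := ((hTt' x hx).const_mul (k₁:ℂ)).mul c1
    have h2 := ((hD3' x hx).const_mul (k₂:ℂ)).mul c3
    have h3 := (hS' x hx).mul c5
    have hsum := (h1.add h2).add h3
    have hconjT : (starRingEnd ℂ) (Tt x)
        = (starRingEnd ℂ) (D1 x) + (starRingEnd ℂ) (v3 x) + (l:ℂ) * (starRingEnd ℂ) (v5 x) := by
      rw [hTtdef]; simp [map_add, map_mul, Complex.conj_ofReal]
    have hconjh : (starRingEnd ℂ) (ht x)
        = (starRingEnd ℂ) (D5 x) - (l:ℂ) * (starRingEnd ℂ) (v1 x) := by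
      rw [hhtdef]; simp [map_sub, map_mul, Complex.conj_ofReal]
    convert hsum using 1
    · rfl
    · rfl
    rw [hgdef]
    simp only []
    rw [hconjT, hconjh]
    field_simp
    ring
  have hPL : P L = 0 := by rw [hPdef]; simp [hb1L, hb3L, hb5L]
  have hP0 : P 0 = 0 := by rw [hPdef]; simp [hb10, hb30, hb50]
  have hgint : IntervalIntegrable g volume 0 L := by
    apply ContinuousOn.intervalIntegrable
    rwa [uIcc_of_le hL0]
  have hginteg : ∫ x in (0:ℝ)..L, g x = 0 := by
    rw [intervalIntegral.integral_eq_sub_of_hasDeriv_right_of_le hL0 hPcont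
      (fun x hx => (hPderiv x hx).hasDerivWithinAt) hgint, hPL, hP0, sub_zero]
  -- pointwise re/im decomposition of g
  have hgsplit : ∀ x ∈ Ioo (0:ℝ) L, g x
      = ((-(lam)^2 * (ρ₁ * Complex.normSq (v1 x) + ρ₂ * Complex.normSq (v3 x)
        + ρ₁ * Complex.normSq (v5 x)) + k₂ * Complex.normSq (D3 x) + k₁ * Complex.normSq (Tt x)
        + k₃ * Complex.normSq (ht x) : ℝ) : ℂ)
        + Complex.I * ((lam * (d x * Complex.normSq (ht x)) : ℝ) : ℂ) := by
    intro x hx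
    have n1 := Complex.mul_conj (v1 x)
    have n3 := Complex.mul_conj (v3 x)
    have n5 := Complex.mul_conj (v5 x)
    have nD3 := Complex.mul_conj (D3 x)
    have nT := Complex.mul_conj (Tt x)
    have n6 := Complex.mul_conj (ht x)
    rw [hgdef]
    simp only []
    rw [hSval x hx]
    push_cast
    linear_combination (-(lam:ℂ)^2*(ρ₁:ℂ))*n1 + (-(lam:ℂ)^2*(ρ₂:ℂ))*n3 + (-(lam:ℂ)^2*(ρ₁:ℂ))*n5
      + (k₂:ℂ)*nD3 + (k₁:ℂ)*nT + ((k₃:ℂ) + (d x:ℂ)*(Complex.I*(lam:ℂ)))*n6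
  have hgim : ∀ x ∈ Ioo (0:ℝ) L, (g x).im = lam * (d x * Complex.normSq (ht x)) := by
    intro x hx
    rw [hgsplit x hx]
    simp only [Complex.add_im, Complex.mul_im, Complex.ofReal_re, Complex.ofReal_im,
      Complex.I_re, Complex.I_im]
    ring
  have hgre : ∀ x ∈ Ioo (0:ℝ) L, (g x).re
      = -(lam)^2 * (ρ₁ * Complex.normSq (v1 x) + ρ₂ * Complex.normSq (v3 x)
        + ρ₁ * Complex.normSq (v5 x)) + k₂ * Complex.normSq (D3 x) + k₁ * Complex.normSq (Tt x)
        + k₃ * Complex.normSq (ht x) := by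
    intro x hx
    rw [hgsplit x hx]
    simp only [Complex.add_re, Complex.mul_re, Complex.ofReal_re, Complex.ofReal_im,
      Complex.I_re, Complex.I_im]
    ring
  -- integrability of the real integrands
  have hdm : Measurable d := by
    have hde : d = fun x => if x ∈ Ioo α β then d₀ else 0 := by
      funext x; rw [hd x]; simp [Set.mem_Ioo]
    rw [hde]
    exact Measurable.ite measurableSet_Ioo measurable_const measurable_const
  have hnsqcont : ContinuousOn (fun x => Complex.normSq (ht x)) (Icc 0 L) :=
    Complex.continuous_normSq.comp_continuousOn hhtcont
  obtain ⟨C, hC⟩ := (isCompact_Icc).exists_bound_of_continuousOn hnsqcont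
  have hqint : IntegrableOn (fun x => d x * Complex.normSq (ht x)) (Ioo (0:ℝ) L) := by
    apply Integrable.mono' (g := fun _ => d₀ * C)
      (integrableOn_const measure_Ioo_lt_top.ne)
    · exact (hdm.aestronglyMeasurable).mul
        ((hnsqcont.mono Ioo_subset_Icc_self).aestronglyMeasurable measurableSet_Ioo)
    · rw [ae_restrict_iff' measurableSet_Ioo]
      filter_upwards with x hx
      have h2 : 0 ≤ Complex.normSq (ht x) := Complex.normSq_nonneg _
      have h3 : Complex.normSq (ht x) ≤ C := by
        have := hC x (Ioo_subset_Icc_self hx)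
        rwa [Real.norm_eq_abs, abs_of_nonneg h2] at this
      have h4 : d x ≤ d₀ := by rw [hd x]; split; exacts [le_rfl, hd₀.le]
      rw [Real.norm_eq_abs, abs_of_nonneg (mul_nonneg (hdnn x) h2)]
      exact mul_le_mul h4 h3 h2 hd₀.le
  -- imaginary part of the energy identity
  have hIm2 : ∫ x in Ioo (0:ℝ) L, lam * (d x * Complex.normSq (ht x)) = 0 := by
    have him0 : (∫ x in Ioc (0:ℝ) L, g x).im = 0 := by
      rw [← intervalIntegral.integral_of_le hL0, hginteg]; rfl
    have him1 : ∫ x in Ioc (0:ℝ) L, (g x).im = 0 := by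
      have h' := integral_im hgint.1
      simpa [him0] using h'
    rw [integral_Ioc_eq_integral_Ioo] at him1
    have hcongr : ∫ x in Ioo (0:ℝ) L, (g x).im
        = ∫ x in Ioo (0:ℝ) L, lam * (d x * Complex.normSq (ht x)) :=
      setIntegral_congr_fun measurableSet_Ioo (fun x hx => hgim x hx)
    rw [hcongr] at him1
    exact him1

  -- finishing reduction: it suffices to kill v1, v3, v5
  have htri : ∀ x ∈ Icc (0:ℝ) L, x = 0 ∨ x = L ∨ x ∈ Ioo (0:ℝ) L := by
    intro x hx
    rcases eq_or_lt_of_le hx.1 with h|h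
    · exact Or.inl h.symm
    rcases eq_or_lt_of_le hx.2 with h2|h2
    · exact Or.inr (Or.inl h2)
    · exact Or.inr (Or.inr ⟨h, h2⟩)
  have hfinish : (∀ x ∈ Icc (0:ℝ) L, v1 x = 0 ∧ v3 x = 0 ∧ v5 x = 0) →
      ∀ x ∈ Icc (0:ℝ) L,
        v1 x = 0 ∧ v2 x = 0 ∧ v3 x = 0 ∧ v4 x = 0 ∧ v5 x = 0 ∧ v6 x = 0 := by
    intro h x hx
    obtain ⟨h1, h3, h5⟩ := h x hx
    refine ⟨h1, ?_, h3, ?_, h5, ?_⟩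
    · rcases htri x hx with rfl|rfl|hio
      exacts [hb20, hb2L, by rw [he1 x hio, h1, mul_zero]]
    · rcases htri x hx with rfl|rfl|hio
      exacts [hb40, hb4L, by rw [he3 x hio, h3, mul_zero]]
    · rcases htri x hx with rfl|rfl|hio
      exacts [hb60, hb6L, by rw [he5 x hio, h5, mul_zero]]
  -- transferring a derivative within Icc to a derivative within Ici
  have hIci : ∀ (f : ℝ → ℂ) (c : ℂ) (x : ℝ), x ∈ Ico (0:ℝ) L →
      HasDerivWithinAt f c (Icc (0:ℝ) L) x → HasDerivWithinAt f c (Ici x) x := by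
    intro f c x hx h
    apply h.mono_of_mem_nhdsWithin
    have h1 : Icc x L ∈ nhdsWithin x (Ici x) := Icc_mem_nhdsGE_of_mem ⟨le_rfl, hx.2⟩
    exact Filter.mem_of_superset h1 (Icc_subset_Icc hx.1 le_rfl)
  have hTx : ∀ x : ℝ, Tt x = D1 x + v3 x + (l:ℂ) * v5 x := fun x => by rw [hTtdef]
  by_cases hlam : lam = 0
  · -- the case λ = 0
    subst hlam
    apply hfinish
    -- real part of the energy identity
    have hgre0 : ∀ x ∈ Ioo (0:ℝ) L, (g x).re
        = k₂ * Complex.normSq (D3 x) + k₁ * Complex.normSq (Tt x)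
          + k₃ * Complex.normSq (ht x) := by
      intro x hx
      rw [hgre x hx]; ring
    have hRcont : ContinuousOn (fun x => k₂ * Complex.normSq (D3 x)
        + k₁ * Complex.normSq (Tt x) + k₃ * Complex.normSq (ht x)) (Icc 0 L) :=
      ((continuousOn_const.mul (Complex.continuous_normSq.comp_continuousOn hD3cont)).add
        (continuousOn_const.mul (Complex.continuous_normSq.comp_continuousOn hTtcont))).add
        (continuousOn_const.mul (Complex.continuous_normSq.comp_continuousOn hhtcont))
    have hRint : IntegrableOn (fun x => k₂ * Complex.normSq (D3 x)
        + k₁ * Complex.normSq (Tt x) + k₃ * Complex.normSq (ht x)) (Ioo (0:ℝ) L) :=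
      (hRcont.integrableOn_Icc).mono_set Ioo_subset_Icc_self
    have hRe2 : ∫ x in Ioo (0:ℝ) L, (k₂ * Complex.normSq (D3 x)
        + k₁ * Complex.normSq (Tt x) + k₃ * Complex.normSq (ht x)) = 0 := by
      have hre0 : (∫ x in Ioc (0:ℝ) L, g x).re = 0 := by
        rw [← intervalIntegral.integral_of_le hL0, hginteg]; rfl
      have hre1 : ∫ x in Ioc (0:ℝ) L, (g x).re = 0 := by
        have h' := integral_re hgint.1
        simpa [hre0] using h'
      rw [integral_Ioc_eq_integral_Ioo] at hre1
      have hcongr : ∫ x in Ioo (0:ℝ) L, (g x).re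
          = ∫ x in Ioo (0:ℝ) L, (k₂ * Complex.normSq (D3 x)
            + k₁ * Complex.normSq (Tt x) + k₃ * Complex.normSq (ht x)) :=
        setIntegral_congr_fun measurableSet_Ioo (fun x hx => hgre0 x hx)
      rw [hcongr] at hre1
      exact hre1
    have hRae : ∀ᵐ x ∂(volume.restrict (Ioo (0:ℝ) L)), (k₂ * Complex.normSq (D3 x)
        + k₁ * Complex.normSq (Tt x) + k₃ * Complex.normSq (ht x)) = 0 := by
      apply (integral_eq_zero_iff_of_nonneg_ae _ hRint).mp hRe2
      apply Filter.Eventually.of_forall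
      intro x
      have := Complex.normSq_nonneg (D3 x)
      have := Complex.normSq_nonneg (Tt x)
      have := Complex.normSq_nonneg (ht x)
      positivity
    have hR0 : ∀ x ∈ Ioo (0:ℝ) L, (k₂ * Complex.normSq (D3 x)
        + k₁ * Complex.normSq (Tt x) + k₃ * Complex.normSq (ht x)) = 0 :=
      bresse_zero_of_ae_zero isOpen_Ioo (hRcont.mono Ioo_subset_Icc_self) hRae
    have hD3z : ∀ x ∈ Ioo (0:ℝ) L, D3 x = 0 := by
      intro x hx
      apply Complex.normSq_eq_zero.mp
      have h0 := hR0 x hx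
      have n1 := Complex.normSq_nonneg (D3 x)
      have n2 := Complex.normSq_nonneg (Tt x)
      have n3 := Complex.normSq_nonneg (ht x)
      nlinarith
    have hTz : ∀ x ∈ Ioo (0:ℝ) L, Tt x = 0 := by
      intro x hx
      apply Complex.normSq_eq_zero.mp
      have h0 := hR0 x hx
      have n1 := Complex.normSq_nonneg (D3 x)
      have n2 := Complex.normSq_nonneg (Tt x)
      have n3 := Complex.normSq_nonneg (ht x)
      nlinarith
    have hhz : ∀ x ∈ Ioo (0:ℝ) L, ht x = 0 := by
      intro x hx
      apply Complex.normSq_eq_zero.mp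
      have h0 := hR0 x hx
      have n1 := Complex.normSq_nonneg (D3 x)
      have n2 := Complex.normSq_nonneg (Tt x)
      have n3 := Complex.normSq_nonneg (ht x)
      nlinarith
    have hD3cc := bresse_closure_val hL Ioo_subset_Icc_self hD3cont hD3z
    have hv3z : ∀ x ∈ Icc (0:ℝ) L, v3 x = 0 := by
      have hcst := constant_of_has_deriv_right_zero (f := v3) (a := 0) (b := L) hv3cont ?_
      · intro x hx
        rw [hcst x hx, hb30]
      · intro x hx
        rcases eq_or_lt_of_le hx.1 with heq|h'
        · subst heq
          apply hIci v3 0 0 hx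
          have b3 : HasDerivWithinAt v3 (D3 0) (Icc (0:ℝ) L) 0 :=
            ((hv3.differentiableOn (by norm_num)) 0 (left_mem_Icc.mpr hL0)).hasDerivWithinAt
          rwa [hD3cc.1] at b3
        · have h := hdiff3 x ⟨h', hx.2⟩
          rw [hD3z x ⟨h', hx.2⟩] at h
          exact h.hasDerivWithinAt
    have hD1eq : ∀ x ∈ Ioo (0:ℝ) L, D1 x = -(l:ℂ) * v5 x := by
      intro x hx
      have h0 := hTz x hx
      rw [hTx x, hv3z x (Ioo_subset_Icc_self hx)] at h0
      linear_combination h0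
    have hD5eq : ∀ x ∈ Ioo (0:ℝ) L, D5 x = (l:ℂ) * v1 x := by
      intro x hx
      have h0 := hhz x hx
      simp only [hhtdef] at h0
      linear_combination h0
    -- the conserved quantity |v1|² + |v5|²
    set Gf : ℝ → ℂ := fun x => v1 x * (starRingEnd ℂ) (v1 x)
      + v5 x * (starRingEnd ℂ) (v5 x) with hGdef
    have hGcont : ContinuousOn Gf (Icc 0 L) :=
      (hv1cont.mul hv1cont.star).add (hv5cont.mul hv5cont.star)
    have hGder : ∀ x ∈ Ico (0:ℝ) L, HasDerivWithinAt Gf 0 (Ici x) x := by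
      intro x hx
      rcases eq_or_lt_of_le hx.1 with heq|h'
      · subst heq
        apply hIci Gf 0 0 hx
        have b1 : HasDerivWithinAt v1 (D1 0) (Icc (0:ℝ) L) 0 :=
          ((hv1.differentiableOn (by norm_num)) 0 (left_mem_Icc.mpr hL0)).hasDerivWithinAt
        have b5 : HasDerivWithinAt v5 (D5 0) (Icc (0:ℝ) L) 0 :=
          ((hv5.differentiableOn (by norm_num)) 0 (left_mem_Icc.mpr hL0)).hasDerivWithinAt
        have hsum := (b1.mul b1.star).add (b5.mul b5.star)
        convert hsum using 1
        · rfl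
        · rfl
        rw [hb10, hb50]
        simp
      · have hxI : x ∈ Ioo (0:ℝ) L := ⟨h', hx.2⟩
        have d1 := hdiff1 x hxI
        have d5 := hdiff5 x hxI
        have hsum := (d1.mul d1.star).add (d5.mul d5.star)
        have h0 : HasDerivAt Gf 0 x := by
          convert hsum using 1
          · rfl
          · rfl
          rw [hD1eq x hxI, hD5eq x hxI]
          simp only [RCLike.star_def, map_mul, map_neg, Complex.conj_ofReal]
          ring
        exact h0.hasDerivWithinAt
    have hGconst := constant_of_has_deriv_right_zero hGcont hGder
    intro x hx
    have hGx : Gf x = 0 := by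
      rw [hGconst x hx, hGdef]
      simp [hb10, hb50]
    rw [hGdef] at hGx
    simp only [Complex.mul_conj] at hGx
    have hre := congrArg Complex.re hGx
    push_cast at hre
    simp only [Complex.add_re, Complex.ofReal_re, Complex.zero_re] at hre
    have n1 := Complex.normSq_nonneg (v1 x)
    have n5 := Complex.normSq_nonneg (v5 x)
    refine ⟨Complex.normSq_eq_zero.mp (by nlinarith), hv3z x hx,
      Complex.normSq_eq_zero.mp (by nlinarith)⟩
  · -- the case λ ≠ 0
    apply hfinish
    have hlamne : (lam:ℂ) ≠ 0 := by exact_mod_cast hlam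
    -- step 1 : the damped quantity vanishes on (α, β)
    have hq0ae : ∀ᵐ x ∂(volume.restrict (Ioo (0:ℝ) L)), d x * Complex.normSq (ht x) = 0 := by
      have hnn : 0 ≤ᵐ[volume.restrict (Ioo (0:ℝ) L)]
          fun x => d x * Complex.normSq (ht x) :=
        Filter.Eventually.of_forall (fun x => mul_nonneg (hdnn x) (Complex.normSq_nonneg _))
      have hint0 : ∫ x in Ioo (0:ℝ) L, d x * Complex.normSq (ht x) = 0 := by
        have h2 : lam * ∫ x in Ioo (0:ℝ) L, d x * Complex.normSq (ht x) = 0 := by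
          rw [← MeasureTheory.integral_const_mul]
          exact hIm2
        exact (mul_eq_zero.mp h2).resolve_left hlam
      exact (integral_eq_zero_iff_of_nonneg_ae hnn hqint).mp hint0
    have hsubαβ : Ioo α β ⊆ Ioo (0:ℝ) L :=
      fun x hx => ⟨lt_trans hα hx.1, lt_trans hx.2 hβL⟩
    have hsubIcc : Ioo α β ⊆ Icc (0:ℝ) L := hsubαβ.trans Ioo_subset_Icc_self
    have hq0ae2 := ae_restrict_of_ae_restrict_of_subset hsubαβ hq0ae
    have hnsq0 : ∀ x ∈ Ioo α β, Complex.normSq (ht x) = 0 := by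
      apply bresse_zero_of_ae_zero isOpen_Ioo (hnsqcont.mono hsubIcc)
      have hmemae := ae_restrict_mem (μ := volume) (measurableSet_Ioo : MeasurableSet (Ioo α β))
      filter_upwards [hq0ae2, hmemae] with x h1 h2
      have hdx : d x = d₀ := by rw [hd x, if_pos (mem_Ioo.mp h2)]
      rw [hdx] at h1
      exact (mul_eq_zero.mp h1).resolve_left hd₀.ne'
    have hht0 : ∀ x ∈ Ioo α β, ht x = 0 :=
      fun x hx => Complex.normSq_eq_zero.mp (hnsq0 x hx)
    -- step 2 : algebra on (α, β)
    set cC : ℂ := ((lam:ℂ)^2*ρ₁ - (l:ℂ)^2*k₁)/((l:ℂ)*k₁) with hcCdef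
    set ψ₀ : ℂ := v5 ((α+β)/2) with hψdef
    have hmid : (α+β)/2 ∈ Ioo α β := ⟨by linarith, by linarith⟩
    have hD5eq : ∀ x ∈ Ioo α β, D5 x = (l:ℂ) * v1 x := by
      intro x hx
      have h0 := hht0 x hx
      simp only [hhtdef] at h0
      linear_combination h0
    have hS0 : ∀ x ∈ Ioo α β, S x = 0 := fun x hx => by
      rw [hSval x (hsubαβ hx), hht0 x hx, mul_zero]
    have hderS0 : ∀ x ∈ Ioo α β, deriv S x = 0 := by
      intro x hx
      have hev : S =ᶠ[nhds x] (fun _ => (0:ℂ)) := by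
        filter_upwards [isOpen_Ioo.mem_nhds hx] with y hy
        exact hS0 y hy
      rw [hev.deriv_eq, deriv_const]
    have hTeq : ∀ x ∈ Ioo α β, (l:ℂ)*k₁*Tt x = (lam:ℂ)^2*ρ₁*v5 x := by
      intro x hx
      have e6 := he6 x (hsubαβ hx)
      rw [hder1 x (hsubαβ hx), hderS0 x hx] at e6
      have e5 := he5 x (hsubαβ hx)
      rw [hTx x]
      linear_combination -e6 - Complex.I*(lam:ℂ)*(ρ₁:ℂ)*e5
        - (lam:ℂ)^2*(ρ₁:ℂ)*(v5 x)*Complex.I_sq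
    have hv1z : ∀ x ∈ Ioo α β, v1 x = 0 := by
      intro x hx
      have hA : HasDerivAt (fun y => (l:ℂ)*k₁*Tt y)
          (((l:ℂ)*k₁)*((-(lam:ℂ)^2*ρ₁*v1 x - (l:ℂ)*S x)/k₁)) x :=
        (hTt' x (hsubαβ hx)).const_mul _
      have hev : (fun y => (l:ℂ)*k₁*Tt y) =ᶠ[nhds x] (fun y => (lam:ℂ)^2*ρ₁*v5 y) := by
        filter_upwards [isOpen_Ioo.mem_nhds hx] with y hy
        exact hTeq y hy
      have hB : HasDerivAt (fun y => (l:ℂ)*k₁*Tt y) ((lam:ℂ)^2*ρ₁*D5 x) x := by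
        have hB0 : HasDerivAt (fun y => (lam:ℂ)^2*(ρ₁:ℂ)*v5 y) ((lam:ℂ)^2*ρ₁*D5 x) x :=
          (hdiff5 x (hsubαβ hx)).const_mul _
        exact hB0.congr_of_eventuallyEq hev
      have huniq := hA.unique hB
      rw [hD5eq x hx, hS0 x hx] at huniq
      have h2 : ((2:ℂ)*lam^2*ρ₁*l*k₁) * v1 x = 0 := by
        field_simp at huniq
        linear_combination (-(l:ℂ)*k₁) * huniq
      have hne : ((2:ℂ)*lam^2*ρ₁*l*k₁) ≠ 0 := by
        apply mul_ne_zero (mul_ne_zero (mul_ne_zero (mul_ne_zero two_ne_zero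
          (pow_ne_zero 2 hlamne)) hρ1ne) hlne) hk1ne
      exact (mul_eq_zero.mp h2).resolve_left hne
    have hv5c : ∀ x ∈ Ioo α β, v5 x = ψ₀ := by
      intro x hx
      refine bresse_const_of_hasDerivAt_zero (f := v5) ?_ hx hmid
      intro z hz
      have h := hdiff5 z (hsubαβ hz)
      rw [hD5eq z hz, hv1z z hz, mul_zero] at h
      exact h
    have hD1z : ∀ x ∈ Ioo α β, D1 x = 0 := by
      intro x hx
      rw [← hder1 x (hsubαβ hx)]
      have hev : v1 =ᶠ[nhds x] (fun _ => (0:ℂ)) := by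
        filter_upwards [isOpen_Ioo.mem_nhds hx] with y hy
        exact hv1z y hy
      rw [hev.deriv_eq, deriv_const]
    have hv3c : ∀ x ∈ Ioo α β, v3 x = cC * ψ₀ := by
      intro x hx
      have h1 := hTeq x hx
      rw [hTx x, hD1z x hx, hv5c x hx] at h1
      rw [hcCdef]
      field_simp
      linear_combination h1
    have hD3z : ∀ x ∈ Ioo α β, D3 x = 0 := by
      intro x hx
      rw [← hder3 x (hsubαβ hx)]
      have hev : v3 =ᶠ[nhds x] (fun _ => cC * ψ₀) := by
        filter_upwards [isOpen_Ioo.mem_nhds hx] with y hy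
        exact hv3c y hy
      rw [hev.deriv_eq, deriv_const]
    have hkey : (k₁:ℂ)*(cC + l)*ψ₀ = (lam:ℂ)^2*ρ₂*cC*ψ₀ := by
      have e4 := he4 ((α+β)/2) (hsubαβ hmid)
      have hdd3 : deriv (deriv v3) ((α+β)/2) = 0 := by
        have hev : deriv v3 =ᶠ[nhds ((α+β)/2)] (fun _ => (0:ℂ)) := by
          filter_upwards [isOpen_Ioo.mem_nhds hmid] with y hy
          rw [hder3 y (hsubαβ hy)]
          exact hD3z y hy
        rw [hev.deriv_eq, deriv_const]
      rw [hdd3, hder1 _ (hsubαβ hmid), hD1z _ hmid, hv3c _ hmid, hv5c _ hmid] at e4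
      have e3 := he3 ((α+β)/2) (hsubαβ hmid)
      rw [hv3c _ hmid] at e3
      linear_combination -e4 - Complex.I*(lam:ℂ)*(ρ₂:ℂ)*e3
        - (lam:ℂ)^2*(ρ₂:ℂ)*(cC*ψ₀)*Complex.I_sq
    have hcl : (l:ℂ)*k₁*(cC + l) = (lam:ℂ)^2*ρ₁ := by
      rw [hcCdef]
      field_simp
      ring
    -- step 3 : ODE uniqueness outside (α, β)
    set A0 : Matrix (Fin 6) (Fin 6) ℂ := !![0,1,0,0,0,0;
      -(lam:ℂ)^2*ρ₁/k₁ - l^2, 0, 0, -1, 0, -((l:ℂ)/k₁) - l/k₃;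
      0,0,0,1,0,0;
      0, (k₁:ℂ)/k₂, ((k₁:ℂ) - lam^2*ρ₂)/k₂, 0, (l:ℂ)*k₁/k₂, 0;
      (l:ℂ), 0,0,0,0, 1/k₃;
      0, (l:ℂ)*k₁, (l:ℂ)*k₁, 0, (l:ℂ)^2*k₁ - lam^2*ρ₁, 0] with hA0def
    set U : ℝ → Fin 6 → ℂ := fun x => ![v1 x, D1 x, v3 x, D3 x, v5 x, S x] with hUdef
    have hUcont : ContinuousOn U (Icc 0 L) := by
      rw [hUdef]
      apply continuousOn_pi.mpr
      intro i
      fin_cases i <;> simp only [bresse_vec6_0, bresse_vec6_1, bresse_vec6_2, bresse_vec6_3, bresse_vec6_4, bresse_vec6_5]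
      exacts [hv1cont, hD1cont, hv3cont, hD3cont, hv5cont, hScont]
    have hU' : ∀ x ∈ Ioo (0:ℝ) L, D5 x = (l:ℂ) * v1 x + S x / k₃ →
        HasDerivAt U (A0.mulVec (U x)) x := by
      intro x hx hstar
      have hD1fun : D1 = fun y => Tt y - v3 y - (l:ℂ) * v5 y := by
        funext y
        rw [hTtdef]
        ring
      have r0 := hdiff1 x hx
      have r1 : HasDerivAt D1
          ((-(lam:ℂ)^2*ρ₁*v1 x - (l:ℂ)*S x)/k₁ - D3 x - (l:ℂ)*D5 x) x := by
        rw [hD1fun]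
        exact ((hTt' x hx).sub (hdiff3 x hx)).sub ((hdiff5 x hx).const_mul _)
      have r2 := hdiff3 x hx
      have r3 := hD3' x hx
      have r4 := hdiff5 x hx
      have r5 := hS' x hx
      have key : HasDerivAt U (![D1 x,
          (-(lam:ℂ)^2*ρ₁*v1 x - (l:ℂ)*S x)/k₁ - D3 x - (l:ℂ)*D5 x,
          D3 x, (-(lam:ℂ)^2*ρ₂*v3 x + (k₁:ℂ)*Tt x)/k₂, D5 x,
          (l:ℂ)*k₁*Tt x - (lam:ℂ)^2*ρ₁*v5 x]) x := by
        rw [hUdef]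
        apply hasDerivAt_pi.mpr
        intro i
        fin_cases i <;> simp only [bresse_vec6_0, bresse_vec6_1, bresse_vec6_2, bresse_vec6_3, bresse_vec6_4, bresse_vec6_5]
        exacts [r0, r1, r2, r3, r4, r5]
      convert key using 1
      funext i
      fin_cases i <;>
        simp only [hA0def, hUdef, Matrix.mulVec, dotProduct, Fin.sum_univ_six,
          Matrix.of_apply, Matrix.cons_val', Fin.reduceFinMk, Matrix.cons_val, bresse_vec6_0, bresse_vec6_1, bresse_vec6_2, bresse_vec6_3, bresse_vec6_4, bresse_vec6_5] <;>
        simp only [hTx x, hstar, one_mul] <;>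
        field_simp <;>
        ring
    set V₀ : Fin 6 → ℂ := ![0, 0, cC*ψ₀, 0, ψ₀, 0] with hV₀def
    have hAV0 : A0.mulVec V₀ = 0 := by
      funext i
      fin_cases i <;>
        simp [hA0def, hV₀def, Matrix.cons_mulVec, Matrix.cons_dotProduct,
          Matrix.vecHead, Matrix.vecTail, Matrix.dotProduct_of_isEmpty, Pi.zero_apply,
          Function.comp_apply, Matrix.cons_val_succ, Matrix.cons_val_zero, bresse_vec6_0, bresse_vec6_1, bresse_vec6_2, bresse_vec6_3, bresse_vec6_4, bresse_vec6_5]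
      · linear_combination hkey / (k₂:ℂ)
      · linear_combination ψ₀ * hcl
    have hc1 := bresse_closure_val hαβ hsubIcc hv1cont hv1z
    have hcD1 := bresse_closure_val hαβ hsubIcc hD1cont hD1z
    have hc3 := bresse_closure_val hαβ hsubIcc hv3cont hv3c
    have hcD3 := bresse_closure_val hαβ hsubIcc hD3cont hD3z
    have hc5 := bresse_closure_val hαβ hsubIcc hv5cont hv5c
    have hcS := bresse_closure_val hαβ hsubIcc hScont hS0
    have hUα : U α = V₀ := by
      rw [hUdef, hV₀def]
      funext i
      fin_cases i <;> simp [hc1.1, hcD1.1, hc3.1, hcD3.1, hc5.1, hcS.1]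
    have hUβ : U β = V₀ := by
      rw [hUdef, hV₀def]
      funext i
      fin_cases i <;> simp [hc1.2, hcD1.2, hc3.2, hcD3.2, hc5.2, hcS.2]
    have hUmidIoo : ∀ x ∈ Ioo α β, U x = V₀ := by
      intro x hx
      rw [hUdef, hV₀def]
      funext i
      fin_cases i <;> simp [hv1z x hx, hD1z x hx, hv3c x hx, hD3z x hx, hv5c x hx, hS0 x hx]
    have hlip := (LinearMap.toContinuousLinearMap (Matrix.mulVecLin A0)).lipschitz
    have hvlip : ∀ t : ℝ, LipschitzOnWith
        ‖(LinearMap.toContinuousLinearMap (Matrix.mulVecLin A0))‖₊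
        ((fun (_ : ℝ) (u : Fin 6 → ℂ) => A0.mulVec u) t) ((fun (_ : ℝ) => (univ : Set (Fin 6 → ℂ))) t) :=
      fun _ => hlip.lipschitzOnWith
    have hstarAt : ∀ x ∈ Ioo (0:ℝ) L, d x = 0 → D5 x = (l:ℂ)*v1 x + S x / k₃ := by
      intro x hx hdx
      have eS := hSdef x (Ioo_subset_Icc_self hx)
      rw [hder5 x hx, hdx] at eS
      push_cast at eS
      have hS3 : S x = (k₃:ℂ)*(D5 x - (l:ℂ)*v1 x) := by linear_combination eS
      rw [hS3, mul_div_cancel_left₀ _ hk3ne]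
      ring
    have hβmem : β ∈ Icc (0:ℝ) L := ⟨by linarith, hβL.le⟩
    have hfwd : EqOn U (fun _ => V₀) (Icc β L) := by
      apply ODE_solution_unique_of_mem_Icc_right
        (v := fun (_ : ℝ) (u : Fin 6 → ℂ) => A0.mulVec u)
        (s := fun (_ : ℝ) => (univ : Set (Fin 6 → ℂ))) (fun t _ => hvlip t)
        (hUcont.mono (Icc_subset_Icc (by linarith) le_rfl))
        ?_ (fun _ _ => trivial) continuousOn_const ?_ (fun _ _ => trivial) hUβ
      · intro t htm
        have ht1 : t ∈ Ioo (0:ℝ) L := ⟨by linarith [htm.1], htm.2⟩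
        have hdt : d t = 0 := hdx0 t (fun hcon => absurd hcon.1 (not_lt.mpr (by linarith [htm.1])))
        exact (hU' t ht1 (hstarAt t ht1 hdt)).hasDerivWithinAt
      · intro t htm
        have : HasDerivWithinAt (fun _ : ℝ => V₀) 0 (Ici t) t := hasDerivWithinAt_const t _ V₀
        simpa [hAV0] using this
    have hψ0 : ψ₀ = 0 := by
      have hL5 := congrFun (hfwd (right_mem_Icc.mpr hβL.le)) 4
      rw [hUdef, hV₀def] at hL5
      simp only [bresse_vec6_0, bresse_vec6_1, bresse_vec6_2, bresse_vec6_3, bresse_vec6_4, bresse_vec6_5] at hL5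
      rw [← hL5, hb5L]
    have hV0zero : V₀ = 0 := by
      rw [hV₀def, hψ0]
      funext i
      fin_cases i <;> simp [bresse_vec6_0, bresse_vec6_1, bresse_vec6_2, bresse_vec6_3, bresse_vec6_4, bresse_vec6_5]
    have hbwd : EqOn U (fun _ => (0 : Fin 6 → ℂ)) (Icc 0 α) := by
      apply ODE_solution_unique_of_mem_Icc_left
        (v := fun (_ : ℝ) (u : Fin 6 → ℂ) => A0.mulVec u)
        (s := fun (_ : ℝ) => (univ : Set (Fin 6 → ℂ))) (fun t _ => hvlip t)
        (hUcont.mono (Icc_subset_Icc le_rfl (by linarith)))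
        ?_ (fun _ _ => trivial) continuousOn_const ?_ (fun _ _ => trivial)
        (by rw [hUα, hV0zero])
      · intro t htm
        have ht1 : t ∈ Ioo (0:ℝ) L := ⟨htm.1, by linarith [htm.2]⟩
        have hdt : d t = 0 := hdx0 t (fun hcon => absurd hcon.1 (not_lt.mpr (by linarith [htm.2])))
        exact (hU' t ht1 (hstarAt t ht1 hdt)).hasDerivWithinAt
      · intro t htm
        have : HasDerivWithinAt (fun _ : ℝ => (0 : Fin 6 → ℂ)) 0 (Iic t) t :=
          hasDerivWithinAt_const t _ _
        simpa [Matrix.mulVec_zero] using this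
    have hUzero : ∀ x ∈ Icc (0:ℝ) L, U x = 0 := by
      intro x hx
      rcases le_total x α with h | h
      · exact hbwd ⟨hx.1, h⟩
      rcases le_total β x with h2 | h2
      · rw [hfwd ⟨h2, hx.2⟩, hV0zero]
      rcases eq_or_lt_of_le h with heq|h'
      · rw [← heq, hUα, hV0zero]
      rcases eq_or_lt_of_le h2 with heq2|h2'
      · rw [heq2, hUβ, hV0zero]
      · rw [hUmidIoo x ⟨h', h2'⟩, hV0zero]
    intro x hx
    have hUx := hUzero x hx
    have h1 : v1 x = 0 := by
      have := congrFun hUx 0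
      rw [hUdef] at this
      simpa using this
    have h3 : v3 x = 0 := by
      have := congrFun hUx 2
      rw [hUdef] at this
      simpa using this
    have h5 : v5 x = 0 := by
      have := congrFun hUx 4
      rw [hUdef] at this
      simpa using this
    exact ⟨h1, h3, h5⟩
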